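/- Let δ ∈ (0, 1/2), let (Ω, F, P) be a probability space, A ∈ F, and let G, H be sub-σ-fields of F, with X = E[1_A | G] and Y = E[1_A | H]. For an integer n > 2/(1−δ) (so that 1 − δ − 2/n > 0), let Gₙ be the σ-field generated by the sets {k/n ≤ X < (k+1)/n}, 0 ≤ k ≤ n, and Hₙ the σ-field generated by the sets {k/n ≤ Y < (k+1)/n}, 0 ≤ k ≤ n, and set Xₙ = E[1_A | Gₙ], Yₙ = E[1_A | Hₙ]. Then P(|X − Y| ≥ 1 − δ) ≤ P(|Xₙ − Yₙ| ≥ 1 − δ − 2/n). -/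

import Mathlib

open MeasureTheory

/-- Key auxiliary lemma: the conditional expectation with respect to the
discretized σ-field is a.e. within `1/n` of `X`. -/
lemma aux_discretization_close
    {Ω : Type} {F : MeasurableSpace Ω} (P : Measure Ω) [IsProbabilityMeasure P]
    (A : Set Ω) (hA : MeasurableSet A)
    (G : MeasurableSpace Ω) (hG : G ≤ F)
    (X : Ω → ℝ)
    (hX : X = P[A.indicator (fun _ => (1 : ℝ)) | G])
    (n : ℕ) (hn : 0 < n)
    (Gn : MeasurableSpace Ω)
    (hGn : Gn = MeasurableSpace.generateFrom
      {s | ∃ k : ℕ, k ≤ n ∧ s = {ω | (k : ℝ) / n ≤ X ω ∧ X ω < ((k : ℝ) + 1) / n}}) :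
    ∀ᵐ ω ∂P, |(P[A.indicator (fun _ => (1 : ℝ)) | Gn]) ω - X ω| ≤ 1 / n := by
  have hnR : (0 : ℝ) < n := by exact_mod_cast hn
  set f : Ω → ℝ := A.indicator (fun _ => (1 : ℝ)) with hf
  have hfi : Integrable f P :=
    Integrable.indicator (mα := F) (μ := P) (f := fun _ => (1 : ℝ)) (s := A) (integrable_const 1) hA
  have hf0 : ∀ ω, 0 ≤ f ω := fun ω => Set.indicator_nonneg (fun _ _ => zero_le_one) ω
  have hf1 : ∀ ω, f ω ≤ 1 := fun ω => Set.indicator_le' (fun _ _ => le_refl 1)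
    (fun _ _ => zero_le_one) ω
  -- X is [0,1]-valued a.e.
  have hX01 : ∀ᵐ ω ∂P, 0 ≤ X ω ∧ X ω ≤ 1 := by
    have h0 : (0 : Ω → ℝ) ≤ᵐ[P] P[f|G] := condExp_nonneg (Filter.Eventually.of_forall hf0)
    have h1 : P[f|G] ≤ᵐ[P] P[(fun _ => (1 : ℝ))|G] :=
      condExp_mono hfi (integrable_const 1) (Filter.Eventually.of_forall hf1)
    rw [condExp_const hG] at h1
    rw [hX]
    filter_upwards [h0, h1] with ω e0 e1
    exact ⟨e0, e1⟩
  have hXm : StronglyMeasurable[G] X := hX ▸ stronglyMeasurable_condExp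
  -- cells
  set cell : ℕ → Set Ω := fun k => {ω | (k : ℝ) / n ≤ X ω ∧ X ω < ((k : ℝ) + 1) / n} with hcelldef
  have hGnG : Gn ≤ G := by
    rw [hGn]
    apply MeasurableSpace.generateFrom_le
    rintro s ⟨k, hk, rfl⟩
    exact hXm.measurable (measurableSet_Ico (a := (k : ℝ) / n) (b := ((k : ℝ) + 1) / n))
  have hGnF : Gn ≤ F := hGnG.trans hG
  have htower : P[f|Gn] =ᵐ[P] P[X|Gn] := by
    rw [hX]
    exact (condExp_condExp_of_le hGnG hG).symm
  have hcell : ∀ k, k ≤ n → MeasurableSet[Gn] (cell k) := by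
    intro k hk
    rw [hGn]
    exact MeasurableSpace.measurableSet_generateFrom ⟨k, hk, rfl⟩
  set ψ : Ω → ℝ :=
    fun ω => ∑ k ∈ Finset.range (n + 1), (cell k).indicator (fun _ => (k : ℝ) / n) ω with hψdef
  have hψm : StronglyMeasurable[Gn] ψ := by
    apply Finset.stronglyMeasurable_fun_sum
    intro k hk
    exact stronglyMeasurable_const.indicator (hcell k (Nat.lt_succ_iff.mp (Finset.mem_range.mp hk)))
  have hψi : Integrable ψ P := by
    apply integrable_finset_sum
    intro k hk
    exact Integrable.indicator (mα := F) (μ := P) (f := fun _ => (k : ℝ) / n) (s := cell k) (integrable_const _)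
      (hGnF _ (hcell k (Nat.lt_succ_iff.mp (Finset.mem_range.mp hk))))
  have hXi : Integrable X P := hX ▸ integrable_condExp
  -- pointwise bound on X - ψ
  have hpt : ∀ᵐ ω ∂P, 0 ≤ X ω - ψ ω ∧ X ω - ψ ω ≤ 1 / n := by
    filter_upwards [hX01] with ω h01
    obtain ⟨h0, h1⟩ := h01
    have hfl0 : (0 : ℤ) ≤ ⌊(n : ℝ) * X ω⌋ := Int.floor_nonneg.mpr (by positivity)
    set k₀ : ℕ := (⌊(n : ℝ) * X ω⌋).toNat with hk₀
    have hk₀cast : ((k₀ : ℕ) : ℝ) = ((⌊(n : ℝ) * X ω⌋ : ℤ) : ℝ) := by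
      rw [hk₀]; exact_mod_cast congrArg (Int.cast : ℤ → ℝ) (Int.toNat_of_nonneg hfl0)
    have hle : (k₀ : ℝ) ≤ (n : ℝ) * X ω := by rw [hk₀cast]; exact Int.floor_le _
    have hlt : (n : ℝ) * X ω < (k₀ : ℝ) + 1 := by rw [hk₀cast]; exact Int.lt_floor_add_one _
    have hk₀n : k₀ ≤ n := by
      have : (k₀ : ℝ) ≤ (n : ℝ) := by nlinarith
      exact_mod_cast this
    have hmem : ω ∈ cell k₀ := by
      refine ⟨?_, ?_⟩
      · rw [div_le_iff₀ hnR]; nlinarith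
      · rw [lt_div_iff₀ hnR]; nlinarith
    have hψω : ψ ω = (k₀ : ℝ) / n := by
      have hsum : ∑ k ∈ Finset.range (n + 1), (cell k).indicator (fun _ => (k : ℝ) / n) ω
          = (cell k₀).indicator (fun _ => (k₀ : ℝ) / n) ω := by
        apply Finset.sum_eq_single_of_mem k₀ (Finset.mem_range.mpr (Nat.lt_succ_iff.mpr hk₀n))
        intro j hj hjk
        apply Set.indicator_of_notMem
        intro hjm
        apply hjk
        obtain ⟨hj1, hj2⟩ := hjm
        obtain ⟨hm1, hm2⟩ := hmem
        rw [div_le_iff₀ hnR] at hj1 hm1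
        rw [lt_div_iff₀ hnR] at hj2 hm2
        have e1 : (j : ℝ) < (k₀ : ℝ) + 1 := by nlinarith
        have e2 : (k₀ : ℝ) < (j : ℝ) + 1 := by nlinarith
        have e1' : j < k₀ + 1 := by exact_mod_cast e1
        have e2' : k₀ < j + 1 := by exact_mod_cast e2
        omega
      calc ψ ω = ∑ k ∈ Finset.range (n + 1), (cell k).indicator (fun _ => (k : ℝ) / n) ω := rfl
        _ = (cell k₀).indicator (fun _ => (k₀ : ℝ) / n) ω := hsum
        _ = (k₀ : ℝ) / n := Set.indicator_of_mem hmem _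
    obtain ⟨hm1, hm2⟩ := hmem
    rw [div_le_iff₀ hnR] at hm1
    rw [lt_div_iff₀ hnR] at hm2
    rw [hψω]
    constructor
    · have : (k₀ : ℝ) / n ≤ X ω := by rw [div_le_iff₀ hnR]; exact hm1
      linarith
    · have h1n : ((k₀ : ℝ) + 1) / n - (k₀ : ℝ) / n = 1 / n := by field_simp; ring
      have hx2 : X ω < ((k₀ : ℝ) + 1) / n := by rw [lt_div_iff₀ hnR]; exact hm2
      linarith
  -- conditional expectation of X - ψ
  have hψce : P[ψ|Gn] = ψ := condExp_of_stronglyMeasurable hGnF hψm hψi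
  have hsub : P[X - ψ|Gn] =ᵐ[P] P[X|Gn] - P[ψ|Gn] := condExp_sub hXi hψi Gn
  have hc1 : ∀ᵐ ω ∂P, 0 ≤ (P[X - ψ|Gn]) ω := by
    have h := condExp_nonneg (μ := P) (m := Gn) (f := X - ψ)
      (hpt.mono fun ω h => by simpa using h.1)
    filter_upwards [h] with ω hω
    simpa using hω
  have hc2 : ∀ᵐ ω ∂P, (P[X - ψ|Gn]) ω ≤ 1 / n := by
    have h := condExp_mono (μ := P) (m := Gn) (hXi.sub hψi) (integrable_const (1 / (n : ℝ)))
      (hpt.mono fun ω h => by simpa using h.2)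
    rw [condExp_const hGnF] at h
    filter_upwards [h] with ω hω
    simpa using hω
  filter_upwards [htower, hsub, hpt, hc1, hc2] with ω h1 h2 h3 h4 h5
  have h2' : (P[X - ψ|Gn]) ω = (P[X|Gn]) ω - ψ ω := by
    rw [h2]; simp [hψce]
  have key : (P[f|Gn]) ω - X ω = (P[X - ψ|Gn]) ω - (X ω - ψ ω) := by
    rw [h1, h2']; ring
  rw [key, abs_sub_le_iff]
  constructor <;> linarith [h3.1, h3.2]

/-- Discretization of both σ-fields: with X = E[1_A | G], Y = E[1_A | H],
Gₙ, Hₙ the σ-fields generated by the level sets of X resp. Y at scale 1/n,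
Xₙ = E[1_A | Gₙ], Yₙ = E[1_A | Hₙ], and n > 2/(1−δ), one has
P(|X − Y| ≥ 1 − δ) ≤ P(|Xₙ − Yₙ| ≥ 1 − δ − 2/n). -/
theorem discretization_comparison
    {δ : ℝ} (hδ0 : 0 < δ) (hδ1 : δ < 1 / 2)
    {Ω : Type} {F : MeasurableSpace Ω} (P : Measure Ω) [IsProbabilityMeasure P]
    (A : Set Ω) (hA : MeasurableSet A)
    (G H : MeasurableSpace Ω) (hG : G ≤ F) (hH : H ≤ F)
    (X Y : Ω → ℝ)
    (hX : X = P[A.indicator (fun _ => (1 : ℝ)) | G])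
    (hY : Y = P[A.indicator (fun _ => (1 : ℝ)) | H])
    (n : ℕ) (hn : 2 / (1 - δ) < (n : ℝ))
    (Gn Hn : MeasurableSpace Ω)
    (hGn : Gn = MeasurableSpace.generateFrom
      {s | ∃ k : ℕ, k ≤ n ∧ s = {ω | (k : ℝ) / n ≤ X ω ∧ X ω < ((k : ℝ) + 1) / n}})
    (hHn : Hn = MeasurableSpace.generateFrom
      {s | ∃ k : ℕ, k ≤ n ∧ s = {ω | (k : ℝ) / n ≤ Y ω ∧ Y ω < ((k : ℝ) + 1) / n}}) :
    P {ω | 1 - δ ≤ |X ω - Y ω|}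
      ≤ P {ω | 1 - δ - 2 / n ≤ |(P[A.indicator (fun _ => (1 : ℝ)) | Gn]) ω
          - (P[A.indicator (fun _ => (1 : ℝ)) | Hn]) ω|} := by
  have h1δ : (0 : ℝ) < 1 - δ := by linarith
  have hnR : (0 : ℝ) < n := lt_trans (by positivity) hn
  have hn0 : 0 < n := by exact_mod_cast hnR
  have hXc := aux_discretization_close P A hA G hG X hX n hn0 Gn hGn
  have hYc := aux_discretization_close P A hA H hH Y hY n hn0 Hn hHn
  apply measure_mono_ae
  filter_upwards [hXc, hYc] with ω h1 h2
  intro hmem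
  have hmem' : 1 - δ ≤ |X ω - Y ω| := hmem
  show 1 - δ - 2 / (n : ℝ) ≤ |(P[A.indicator (fun _ => (1 : ℝ)) | Gn]) ω
      - (P[A.indicator (fun _ => (1 : ℝ)) | Hn]) ω|
  set a := (P[A.indicator (fun _ => (1 : ℝ)) | Gn]) ω with ha
  set b := (P[A.indicator (fun _ => (1 : ℝ)) | Hn]) ω with hb
  have habs : |X ω - Y ω| ≤ |a - b| + (|a - X ω| + |b - Y ω|) := by
    have e : X ω - Y ω = (a - b) + ((X ω - a) + (b - Y ω)) := by ring
    calc |X ω - Y ω| = |(a - b) + ((X ω - a) + (b - Y ω))| := by rw [← e]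
      _ ≤ |a - b| + |(X ω - a) + (b - Y ω)| := abs_add_le _ _
      _ ≤ |a - b| + (|X ω - a| + |b - Y ω|) := by gcongr; exact abs_add_le _ _
      _ = |a - b| + (|a - X ω| + |b - Y ω|) := by rw [abs_sub_comm (X ω) a]
  have hsum : 1 / (n : ℝ) + 1 / n = 2 / n := by ring
  linarith
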